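/- arXiv:2411.04236 — 7 statements merged into one kernel-verified Lean document; each statement's English description precedes it below -/
import Mathlib

section
/- The sensitivity of the survey-weighted mean equals U_W·U_Y/N: for any two adjacent samples (y,w) and (y′,w′) with entries satisfying 0 ≤ y_i, y_i′ ≤ U_Y and 0 ≤ w_i, w_i′ ≤ U_W, one has |θ̂(y,w) − θ̂(y′,w′)| ≤ U_W·U_Y/N, and this bound is attained by some adjacent pair of samples. -/
open Finset

/-- The survey-weighted mean `θ̂(y,w) = (1/N)·Σᵢ yᵢ wᵢ`. -/
noncomputable def weightedMean (N n : ℕ) (y w : Fin n → ℝ) : ℝ :=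
  (1 / (N : ℝ)) * ∑ i, y i * w i

/-- Two samples `(y,w)` and `(y',w')` are adjacent if they agree on all but
(at most) one index. -/
def Adjacent {n : ℕ} (y w y' w' : Fin n → ℝ) : Prop :=
  ∃ i : Fin n, ∀ j : Fin n, j ≠ i → y j = y' j ∧ w j = w' j

/-- the sensitivity of the survey-weighted mean equals `U_W·U_Y/N`:
the bound holds for all adjacent bounded samples, and it is attained. -/
theorem weighted_mean_sensitivity
    (N n : ℕ) (hn : 1 ≤ n) (hnN : n ≤ N) (UY UW : ℝ) (hUY : 0 < UY) (hUW : 0 < UW) :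
    (∀ y w y' w' : Fin n → ℝ, Adjacent y w y' w' →
      (∀ i, 0 ≤ y i ∧ y i ≤ UY) → (∀ i, 0 ≤ y' i ∧ y' i ≤ UY) →
      (∀ i, 0 ≤ w i ∧ w i ≤ UW) → (∀ i, 0 ≤ w' i ∧ w' i ≤ UW) →
      |weightedMean N n y w - weightedMean N n y' w'| ≤ UW * UY / N) ∧
    (∃ y w y' w' : Fin n → ℝ, Adjacent y w y' w' ∧
      (∀ i, 0 ≤ y i ∧ y i ≤ UY) ∧ (∀ i, 0 ≤ y' i ∧ y' i ≤ UY) ∧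
      (∀ i, 0 ≤ w i ∧ w i ≤ UW) ∧ (∀ i, 0 ≤ w' i ∧ w' i ≤ UW) ∧
      |weightedMean N n y w - weightedMean N n y' w'| = UW * UY / N) := by
  have hN : 0 < (N : ℝ) := by exact_mod_cast lt_of_lt_of_le hn hnN
  constructor
  · rintro y w y' w' ⟨i, hadj⟩ hy hy' hw hw'
    have hsum : ∑ j, y j * w j - ∑ j, y' j * w' j = y i * w i - y' i * w' i := by
      rw [← Finset.sum_sub_distrib]
      rw [Finset.sum_eq_single i]
      · intro j _ hj
        obtain ⟨h1, h2⟩ := hadj j hj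
        rw [h1, h2]; ring
      · simp
    have key : |y i * w i - y' i * w' i| ≤ UW * UY := by
      rw [abs_sub_le_iff]
      constructor
      · have h1 : y i * w i ≤ UY * UW :=
          mul_le_mul (hy i).2 (hw i).2 (hw i).1 hUY.le
        have h2 : 0 ≤ y' i * w' i := mul_nonneg (hy' i).1 (hw' i).1
        nlinarith
      · have h1 : y' i * w' i ≤ UY * UW :=
          mul_le_mul (hy' i).2 (hw' i).2 (hw' i).1 hUY.le
        have h2 : 0 ≤ y i * w i := mul_nonneg (hy i).1 (hw i).1
        nlinarith
    have : weightedMean N n y w - weightedMean N n y' w'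
        = (1 / (N : ℝ)) * (y i * w i - y' i * w' i) := by
      unfold weightedMean; rw [← mul_sub, hsum]
    rw [this, abs_mul, abs_of_pos (by positivity : (0:ℝ) < 1 / (N:ℝ))]
    calc (1 / (N:ℝ)) * |y i * w i - y' i * w' i|
        ≤ (1 / (N:ℝ)) * (UW * UY) := by
          apply mul_le_mul_of_nonneg_left key (by positivity)
      _ = UW * UY / N := by ring
  · have i0 : Fin n := ⟨0, hn⟩
    refine ⟨fun _ => UY, fun _ => UW, fun j => if j = i0 then 0 else UY,
      fun _ => UW, ⟨i0, fun j hj => by simp [hj]⟩, ?_, ?_, ?_, ?_, ?_⟩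
    · intro i; exact ⟨hUY.le, le_refl _⟩
    · intro i; by_cases h : i = i0 <;> simp [h, hUY.le]
    · intro i; exact ⟨hUW.le, le_refl _⟩
    · intro i; exact ⟨hUW.le, le_refl _⟩
    · have hsum : (∑ j : Fin n, UY * UW) - ∑ j : Fin n, (if j = i0 then 0 else UY) * UW
          = UY * UW := by
        rw [← Finset.sum_sub_distrib, Finset.sum_eq_single i0]
        · simp
        · intro j _ hj; simp [hj]
        · simp
      have : weightedMean N n (fun _ => UY) (fun _ => UW)
          - weightedMean N n (fun j => if j = i0 then 0 else UY) (fun _ => UW)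
          = (1 / (N : ℝ)) * (UY * UW) := by
        unfold weightedMean; rw [← mul_sub, hsum]
      rw [this, abs_of_pos (by positivity)]
      field_simp
end

section
/- For every λ ∈ [0,1], the sensitivity of the regularized survey-weighted mean equals G_λ(U_W)·U_Y/N, where G_λ(U_W) = (1−λ)·U_W + λ·N/n: for any two adjacent samples (y,w) and (y′,w′) with entries satisfying 0 ≤ y_i, y_i′ ≤ U_Y and 0 ≤ w_i, w_i′ ≤ U_W, one has |θ̂(y, G_λ(w)) − θ̂(y′, G_λ(w′))| ≤ G_λ(U_W)·U_Y/N, and this bound is attained by some adjacent pair. -/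
open Finset

/-- The regularized weights `G_λ(w)ᵢ = (1−λ)·wᵢ + λ·N/n`. -/
noncomputable def regWeights (N n : ℕ) (lam : ℝ) (w : Fin n → ℝ) : Fin n → ℝ :=
  fun i => (1 - lam) * w i + lam * (N : ℝ) / (n : ℝ)

/-- `G_λ` applied to a scalar: `G_λ(c) = (1−λ)·c + λ·N/n`. -/
noncomputable def regScalar (N n : ℕ) (lam c : ℝ) : ℝ :=
  (1 - lam) * c + lam * (N : ℝ) / (n : ℝ)

/-- for every `λ ∈ [0,1]`, the sensitivity of the regularized
survey-weighted mean equals `G_λ(U_W)·U_Y/N`: the bound holds for all adjacent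
bounded samples, and it is attained. -/
theorem regularized_mean_sensitivity
    (N n : ℕ) (hn : 1 ≤ n) (hnN : n ≤ N) (UY UW : ℝ) (hUY : 0 < UY) (hUW : 0 < UW)
    (lam : ℝ) (hlam : lam ∈ Set.Icc (0 : ℝ) 1) :
    (∀ y w y' w' : Fin n → ℝ, Adjacent y w y' w' →
      (∀ i, 0 ≤ y i ∧ y i ≤ UY) → (∀ i, 0 ≤ y' i ∧ y' i ≤ UY) →
      (∀ i, 0 ≤ w i ∧ w i ≤ UW) → (∀ i, 0 ≤ w' i ∧ w' i ≤ UW) →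
      |weightedMean N n y (regWeights N n lam w) -
        weightedMean N n y' (regWeights N n lam w')| ≤ regScalar N n lam UW * UY / N) ∧
    (∃ y w y' w' : Fin n → ℝ, Adjacent y w y' w' ∧
      (∀ i, 0 ≤ y i ∧ y i ≤ UY) ∧ (∀ i, 0 ≤ y' i ∧ y' i ≤ UY) ∧
      (∀ i, 0 ≤ w i ∧ w i ≤ UW) ∧ (∀ i, 0 ≤ w' i ∧ w' i ≤ UW) ∧
      |weightedMean N n y (regWeights N n lam w) -
        weightedMean N n y' (regWeights N n lam w')| = regScalar N n lam UW * UY / N) := by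
  obtain ⟨hl0, hl1⟩ := hlam
  have hN : 0 < (N : ℝ) := by exact_mod_cast Nat.lt_of_lt_of_le (Nat.lt_of_lt_of_le Nat.zero_lt_one hn) hnN
  have hnpos : 0 < (n : ℝ) := by exact_mod_cast hn
  have hC : 0 ≤ regScalar N n lam UW := by
    unfold regScalar
    have h1 : 0 ≤ (1 - lam) * UW := mul_nonneg (by linarith) hUW.le
    have h2 : 0 ≤ lam * (N : ℝ) / (n : ℝ) := by positivity
    linarith
  -- key: term bounds
  have key : ∀ (a b : ℝ), 0 ≤ a → a ≤ UY → 0 ≤ b → b ≤ UW →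
      0 ≤ a * ((1 - lam) * b + lam * (N : ℝ) / (n : ℝ)) ∧
      a * ((1 - lam) * b + lam * (N : ℝ) / (n : ℝ)) ≤ regScalar N n lam UW * UY := by
    intro a b ha haY hb hbW
    have hGb0 : 0 ≤ (1 - lam) * b + lam * (N : ℝ) / (n : ℝ) := by
      have : 0 ≤ (1 - lam) * b := mul_nonneg (by linarith) hb
      have : 0 ≤ lam * (N : ℝ) / (n : ℝ) := by positivity
      nlinarith [mul_nonneg (sub_nonneg.2 hl1) hb]
    have hGbW : (1 - lam) * b + lam * (N : ℝ) / (n : ℝ) ≤ regScalar N n lam UW := by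
      unfold regScalar
      have : (1 - lam) * b ≤ (1 - lam) * UW := by
        apply mul_le_mul_of_nonneg_left hbW (by linarith)
      linarith
    constructor
    · exact mul_nonneg ha hGb0
    · calc a * ((1 - lam) * b + lam * (N : ℝ) / (n : ℝ))
          ≤ UY * regScalar N n lam UW := by
            apply mul_le_mul haY hGbW hGb0 hUY.le
        _ = regScalar N n lam UW * UY := mul_comm _ _
  constructor
  · rintro y w y' w' ⟨i, hadj⟩ hy hy' hw hw'
    have hdiff : weightedMean N n y (regWeights N n lam w) -
        weightedMean N n y' (regWeights N n lam w') =
        (1 / (N : ℝ)) * (y i * regWeights N n lam w i - y' i * regWeights N n lam w' i) := by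
      unfold weightedMean
      rw [← mul_sub, ← Finset.sum_sub_distrib]
      congr 1
      rw [Finset.sum_eq_single i]
      · intro j _ hj
        obtain ⟨h1, h2⟩ := hadj j hj
        unfold regWeights
        rw [h1, h2]; ring
      · intro h; exact absurd (Finset.mem_univ i) h
    rw [hdiff, abs_mul, abs_of_pos (by positivity : 0 < 1 / (N:ℝ))]
    have h1 := key (y i) (w i) (hy i).1 (hy i).2 (hw i).1 (hw i).2
    have h2 := key (y' i) (w' i) (hy' i).1 (hy' i).2 (hw' i).1 (hw' i).2
    have habs : |y i * regWeights N n lam w i - y' i * regWeights N n lam w' i| ≤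
        regScalar N n lam UW * UY := by
      rw [abs_sub_le_iff]
      unfold regWeights
      constructor <;> linarith [h1.1, h1.2, h2.1, h2.2]
    calc 1 / (N : ℝ) * |y i * regWeights N n lam w i - y' i * regWeights N n lam w' i|
        ≤ 1 / (N : ℝ) * (regScalar N n lam UW * UY) :=
          mul_le_mul_of_nonneg_left habs (by positivity)
      _ = regScalar N n lam UW * UY / N := by ring
  · refine ⟨fun j => if j = ⟨0, hn⟩ then UY else 0, fun _ => UW, fun _ => 0, fun _ => UW,
      ⟨⟨0, hn⟩, fun j hj => ⟨by simp [hj], rfl⟩⟩, ?_, ?_, ?_, ?_, ?_⟩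
    · intro i; by_cases h : i = ⟨0, hn⟩ <;> simp [h, hUY.le]
    · intro i; simp [hUY.le]
    · intro i; simp [hUW.le]
    · intro i; simp [hUW.le]
    · unfold weightedMean regWeights regScalar
      simp only [ite_mul, zero_mul, Finset.sum_ite_eq', Finset.mem_univ, if_true,
        mul_zero, Finset.sum_const_zero, mul_zero, sub_zero]
      rw [abs_of_nonneg]
      · ring
      · have hG : 0 ≤ (1 - lam) * UW + lam * (N : ℝ) / (n : ℝ) := by
          have : 0 ≤ (1 - lam) * UW := mul_nonneg (by linarith) hUW.le
          have : 0 ≤ lam * (N : ℝ) / (n : ℝ) := by positivity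
          linarith
        positivity
end

section
/- Lemma 1 (optimal regularization): with ρ > 0, U_Y > 0 and U_W > N/n, the function ℓ(λ) = (1/(2ρ))·(U_Y/N)²·((1−λ)·U_W + λ·N/n)² + λ²·(θ̂₀ − θ̂)² is minimized over λ ∈ [0,1] at λ* = min{ 1 , [ (U_W/ρ)·(U_Y/N)²·(U_W − N/n) ] / [ (1/ρ)·(U_Y/N)²·(U_W − N/n)² + 2·(θ̂₀ − θ̂)² ] }; that is, ℓ(λ*) ≤ ℓ(λ) for all λ ∈ [0,1]. -/
/-- Lemma 1, optimal regularization: with `ρ > 0`, `U_Y > 0` and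
`U_W > N/n`, the loss `ℓ(λ) = (1/(2ρ))·(U_Y/N)²·((1−λ)·U_W + λ·N/n)² + λ²·(θ̂₀ − θ̂)²`
is minimized over `λ ∈ [0,1]` at
`λ* = min{1, ((U_W/ρ)·(U_Y/N)²·(U_W − N/n)) / ((1/ρ)·(U_Y/N)²·(U_W − N/n)² + 2·(θ̂₀ − θ̂)²)}`. -/
theorem optimal_regularization
    (N n : ℕ) (hn : 1 ≤ n) (hnN : n ≤ N) (UY UW ρ θhat0 θhat : ℝ)
    (hUY : 0 < UY) (hρ : 0 < ρ) (hUW : (N : ℝ) / n < UW)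
    (ℓ : ℝ → ℝ)
    (hℓ : ∀ lam, ℓ lam = (1 / (2 * ρ)) * (UY / N) ^ 2 *
        ((1 - lam) * UW + lam * (N : ℝ) / (n : ℝ)) ^ 2 + lam ^ 2 * (θhat0 - θhat) ^ 2)
    (lamStar : ℝ)
    (hstar : lamStar = min 1
      (((UW / ρ) * (UY / N) ^ 2 * (UW - (N : ℝ) / n)) /
        ((1 / ρ) * (UY / N) ^ 2 * (UW - (N : ℝ) / n) ^ 2 + 2 * (θhat0 - θhat) ^ 2))) :
    ∀ lam ∈ Set.Icc (0 : ℝ) 1, ℓ lamStar ≤ ℓ lam := by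
  have hn0 : (0:ℝ) < (n:ℝ) := by exact_mod_cast hn
  have hN0 : (0:ℝ) < (N:ℝ) := by
    have : 1 ≤ N := le_trans hn hnN
    exact_mod_cast this
  set a : ℝ := (1 / (2 * ρ)) * (UY / N) ^ 2 with ha_def
  set c : ℝ := UW - (N : ℝ) / n with hc_def
  set d : ℝ := (θhat0 - θhat) ^ 2 with hd_def
  have ha : 0 < a := by
    apply mul_pos
    · positivity
    · positivity
  have hc : 0 < c := by simp only [hc_def]; linarith
  have hd : 0 ≤ d := sq_nonneg _
  set A : ℝ := a * c ^ 2 + d with hA_def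
  have hA : 0 < A := by positivity
  set lam0 : ℝ := a * UW * c / A with hlam0_def
  have hAl : A * lam0 = a * UW * c := by
    rw [hlam0_def]; field_simp
  -- lamStar = min 1 lam0
  have hnum : (UW / ρ) * (UY / N) ^ 2 * c = 2 * (a * UW * c) := by
    rw [ha_def]; field_simp
  have hden : (1 / ρ) * (UY / N) ^ 2 * c ^ 2 + 2 * d = 2 * A := by
    rw [hA_def, ha_def]; field_simp
  have hstar' : lamStar = min 1 lam0 := by
    rw [hstar, hnum, hden, hlam0_def, mul_div_mul_left _ _ (two_ne_zero)]
  -- ℓ as quadratic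
  have hq : ∀ lam, ℓ lam = a * (UW - lam * c) ^ 2 + d * lam ^ 2 := by
    intro lam
    rw [hℓ]
    have : (1 - lam) * UW + lam * (N:ℝ) / n = UW - lam * (UW - (N:ℝ)/n) := by ring
    rw [this, ← hc_def]; ring
  intro lam hlam
  obtain ⟨h0, h1⟩ := hlam
  rw [hq, hq, hstar']
  rcases le_total lam0 1 with h | h
  · rw [min_eq_right h]
    have e1 : a * (UW - lam * c) ^ 2 + d * lam ^ 2 -
        (a * (UW - lam0 * c) ^ 2 + d * lam0 ^ 2) =
        (a * c ^ 2 + d) * (lam ^ 2 - lam0 ^ 2) - 2 * (a * UW * c) * (lam - lam0) := by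
      ring
    rw [← hA_def, ← hAl] at e1
    have e2 : A * (lam ^ 2 - lam0 ^ 2) - 2 * (A * lam0) * (lam - lam0)
        = A * (lam - lam0) ^ 2 := by ring
    have := mul_nonneg hA.le (sq_nonneg (lam - lam0))
    linarith [e1, e2]
  · rw [min_eq_left h]
    have e1 : a * (UW - lam * c) ^ 2 + d * lam ^ 2 -
        (a * (UW - 1 * c) ^ 2 + d * 1 ^ 2) =
        (a * c ^ 2 + d) * (lam ^ 2 - 1) - 2 * (a * UW * c) * (lam - 1) := by
      ring
    rw [← hA_def, ← hAl] at e1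
    have e2 : A * (lam ^ 2 - 1) - 2 * (A * lam0) * (lam - 1)
        = A * (1 - lam) * (2 * lam0 - 1 - lam) := by ring
    have h1' : (0:ℝ) ≤ 1 - lam := by linarith
    have h2' : (0:ℝ) ≤ 2 * lam0 - 1 - lam := by linarith
    have := mul_nonneg (mul_nonneg hA.le h1') h2'
    linarith [e1, e2]
end

section
/- If U_W > N/n, then the optimal regularization parameter is strictly positive: λ* = min{1, [ (U_W/ρ)·(U_Y/N)²·(U_W − N/n) ] / [ (1/ρ)·(U_Y/N)²·(U_W − N/n)² + 2·(θ̂₀ − θ̂)² ]} > 0. Consequently, for every sufficiently small λ > 0, ℓ(λ) < ℓ(0), i.e., some regularization strictly decreases the loss ℓ compared to using the survey weights as-is. -/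
/-- if `U_W > N/n`, the optimal regularization parameter
`λ* = min{1, λ_c}` is strictly positive, and consequently for every
sufficiently small `λ > 0` we have `ℓ(λ) < ℓ(0)`: some regularization strictly
decreases the loss compared to using the survey weights as-is. -/
theorem optimal_regularization_positive
    (N n : ℕ) (hn : 1 ≤ n) (hnN : n ≤ N) (UY UW ρ θhat0 θhat : ℝ)
    (hUY : 0 < UY) (hρ : 0 < ρ) (hUW : (N : ℝ) / n < UW)
    (ℓ : ℝ → ℝ)
    (hℓ : ∀ lam, ℓ lam = (1 / (2 * ρ)) * (UY / N) ^ 2 *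
        ((1 - lam) * UW + lam * (N : ℝ) / (n : ℝ)) ^ 2 + lam ^ 2 * (θhat0 - θhat) ^ 2)
    (lamStar : ℝ)
    (hstar : lamStar = min 1
      (((UW / ρ) * (UY / N) ^ 2 * (UW - (N : ℝ) / n)) /
        ((1 / ρ) * (UY / N) ^ 2 * (UW - (N : ℝ) / n) ^ 2 + 2 * (θhat0 - θhat) ^ 2))) :
    0 < lamStar ∧ ∃ δ > (0 : ℝ), ∀ lam : ℝ, 0 < lam → lam < δ → ℓ lam < ℓ 0 := by
  have hn' : (0:ℝ) < n := by exact_mod_cast hn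
  have hN : (0:ℝ) < N := by exact_mod_cast lt_of_lt_of_le (by exact_mod_cast hn) (by exact_mod_cast hnN)
  have hc1 : (1:ℝ) ≤ (N:ℝ)/n := by
    rw [le_div_iff₀ hn']; simpa using (by exact_mod_cast hnN : (n:ℝ) ≤ N)
  have hc : (0:ℝ) < (N:ℝ)/n := lt_of_lt_of_le one_pos hc1
  have hUW0 : 0 < UW := lt_trans hc hUW
  have hsub : 0 < UW - (N:ℝ)/n := sub_pos.mpr hUW
  have hK : 0 < (UY/N)^2 := by positivity
  constructor
  · rw [hstar]
    apply lt_min one_pos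
    apply div_pos
    · positivity
    · positivity
  · set A := 1 / (2*ρ) * (UY/N)^2 with hA
    have hA0 : 0 < A := by positivity
    set d := (θhat0 - θhat)^2 with hd
    have hd0 : 0 ≤ d := sq_nonneg _
    set c := (N:ℝ)/n with hcdef
    have hD : 0 < A * (UW - c)^2 + d := by positivity
    refine ⟨2*A*UW*(UW-c) / (A*(UW-c)^2 + d), by positivity, ?_⟩
    intro lam hlam hlamδ
    rw [hℓ, hℓ]
    have h1 : lam * (A*(UW-c)^2 + d) < 2*A*UW*(UW-c) := (lt_div_iff₀ hD).mp hlamδ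
    have h2 := mul_lt_mul_of_pos_left h1 hlam
    have hcne : (n:ℝ) ≠ 0 := ne_of_gt hn'
    have he : ∀ lam : ℝ, lam * (N:ℝ) / (n:ℝ) = lam * c := by
      intro l; rw [hcdef]; field_simp
    rw [he, he]
    nlinarith [h2, sq_nonneg lam]
end

section
/- Characterization of nontrivial regularization: with ρ > 0 and U_W > N/n, the unconstrained critical value λ_c = [ (U_W/ρ)·(U_Y/N)²·(U_W − N/n) ] / [ (1/ρ)·(U_Y/N)²·(U_W − N/n)² + 2·(θ̂₀ − θ̂)² ] satisfies λ_c ≤ 1 if and only if |θ̂₀ − θ̂| ≥ sqrt( (U_Y²/(2·ρ·N·n))·(U_W − N/n) ). Equivalently, λ_c < 1 if and only if |θ̂₀ − θ̂| > sqrt( (U_Y²/(2·ρ·N·n))·(U_W − N/n) ). -/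
/-- characterization of nontrivial regularization: with `ρ > 0`
and `U_W > N/n`, the unconstrained critical value `λ_c` satisfies `λ_c ≤ 1` iff
`|θ̂₀ − θ̂| ≥ sqrt((U_Y²/(2ρNn))·(U_W − N/n))`, and `λ_c < 1` iff the
inequality is strict. -/
theorem nontrivial_regularization_characterization
    (N n : ℕ) (hn : 1 ≤ n) (hnN : n ≤ N) (UY UW ρ θhat0 θhat : ℝ)
    (hUY : 0 < UY) (hρ : 0 < ρ) (hUW : (N : ℝ) / n < UW)
    (lamC : ℝ)
    (hc : lamC = ((UW / ρ) * (UY / N) ^ 2 * (UW - (N : ℝ) / n)) /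
        ((1 / ρ) * (UY / N) ^ 2 * (UW - (N : ℝ) / n) ^ 2 + 2 * (θhat0 - θhat) ^ 2)) :
    (lamC ≤ 1 ↔
      Real.sqrt (UY ^ 2 / (2 * ρ * N * n) * (UW - (N : ℝ) / n)) ≤ |θhat0 - θhat|) ∧
    (lamC < 1 ↔
      Real.sqrt (UY ^ 2 / (2 * ρ * N * n) * (UW - (N : ℝ) / n)) < |θhat0 - θhat|) := by
  have hn' : (0 : ℝ) < n := by exact_mod_cast hn
  have hN' : (0 : ℝ) < N := by
    have : 1 ≤ N := le_trans hn hnN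
    exact_mod_cast this
  have hD : (0 : ℝ) < UW - (N : ℝ) / n := by
    have h0 : (0 : ℝ) ≤ (N : ℝ) / n := by positivity
    linarith
  set t : ℝ := θhat0 - θhat with ht
  set X : ℝ := UY ^ 2 / (2 * ρ * N * n) * (UW - (N : ℝ) / n) with hX
  have hXnn : 0 ≤ X := by
    rw [hX]; apply mul_nonneg (by positivity) hD.le
  have hid : ((1 / ρ) * (UY / N) ^ 2 * (UW - (N : ℝ) / n) ^ 2 + 2 * t ^ 2)
      - ((UW / ρ) * (UY / N) ^ 2 * (UW - (N : ℝ) / n))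
      = 2 * (t ^ 2 - X) := by
    rw [hX]
    field_simp
    ring
  clear_value t X
  have hden : 0 < (1 / ρ) * (UY / N) ^ 2 * (UW - (N : ℝ) / n) ^ 2 + 2 * t ^ 2 := by
    have h1 : 0 < (1 / ρ) * (UY / N) ^ 2 * (UW - (N : ℝ) / n) ^ 2 :=
      mul_pos (mul_pos (by positivity) (pow_pos (div_pos hUY hN') 2)) (pow_pos hD 2)
    nlinarith [sq_nonneg t]
  have hkey_le : lamC ≤ 1 ↔ X ≤ t ^ 2 := by
    rw [hc, div_le_one hden, ← sub_nonneg, hid]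
    constructor <;> intro h <;> linarith
  have hkey_lt : lamC < 1 ↔ X < t ^ 2 := by
    rw [hc, div_lt_one hden, ← sub_pos, hid]
    constructor <;> intro h <;> linarith
  have hsq : |t| = Real.sqrt (t ^ 2) := (Real.sqrt_sq_eq_abs t).symm
  constructor
  · rw [hkey_le, hsq, Real.sqrt_le_sqrt_iff (sq_nonneg t)]
  · rw [hkey_lt, hsq, Real.sqrt_lt_sqrt_iff hXnn]
end

section
/- Privacy-budget characterization of nontrivial regularization: with U_W > N/n and θ̂₀ ≠ θ̂, the unconstrained critical value λ_c = [ (U_W/ρ)·(U_Y/N)²·(U_W − N/n) ] / [ (1/ρ)·(U_Y/N)²·(U_W − N/n)² + 2·(θ̂₀ − θ̂)² ] satisfies λ_c < 1 if and only if ρ > U_Y²·(U_W − N/n) / ( 2·(θ̂₀ − θ̂)²·N·n ). -/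
/-- privacy-budget characterization of nontrivial regularization:
with `U_W > N/n` and `θ̂₀ ≠ θ̂`, the unconstrained critical value `λ_c`
satisfies `λ_c < 1` iff `ρ > U_Y²·(U_W − N/n) / (2·(θ̂₀ − θ̂)²·N·n)`. -/
theorem privacy_budget_characterization
    (N n : ℕ) (hn : 1 ≤ n) (hnN : n ≤ N) (UY UW ρ θhat0 θhat : ℝ)
    (hUY : 0 < UY) (hρ : 0 < ρ) (hUW : (N : ℝ) / n < UW) (hne : θhat0 ≠ θhat)
    (lamC : ℝ)
    (hc : lamC = ((UW / ρ) * (UY / N) ^ 2 * (UW - (N : ℝ) / n)) /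
        ((1 / ρ) * (UY / N) ^ 2 * (UW - (N : ℝ) / n) ^ 2 + 2 * (θhat0 - θhat) ^ 2)) :
    lamC < 1 ↔
      UY ^ 2 * (UW - (N : ℝ) / n) / (2 * (θhat0 - θhat) ^ 2 * N * n) < ρ := by
  have hn' : (0:ℝ) < n := by exact_mod_cast hn
  have hN : (0:ℝ) < N := by
    have : (1:ℕ) ≤ N := le_trans hn hnN
    exact_mod_cast this
  have hb : 0 < UW - (N : ℝ) / n := sub_pos.mpr hUW
  have hΔ : 0 < (θhat0 - θhat) ^ 2 := by
    have : θhat0 - θhat ≠ 0 := sub_ne_zero.mpr hne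
    positivity
  have hD : 0 < (1 / ρ) * (UY / N) ^ 2 * (UW - (N : ℝ) / n) ^ 2
      + 2 * (θhat0 - θhat) ^ 2 := by positivity
  have hM : 0 < 2 * (θhat0 - θhat) ^ 2 * N * n := by positivity
  have hρNn : (0:ℝ) < ρ * N * n := by positivity
  have hid : UW / ρ * (UY / N) ^ 2 * (UW - (N : ℝ) / n)
      = (1 / ρ) * (UY / N) ^ 2 * (UW - (N : ℝ) / n) ^ 2
        + (1 / ρ) * (UY / N) ^ 2 * (UW - (N : ℝ) / n) * ((N:ℝ) / n) := by
    ring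
  have hid2 : (1 / ρ) * (UY / N) ^ 2 * (UW - (N : ℝ) / n) * ((N:ℝ) / n)
      = UY ^ 2 * (UW - (N : ℝ) / n) / (ρ * N * n) := by
    field_simp
  rw [hc, div_lt_one hD, div_lt_iff₀ hM, hid,
    show ρ * (2 * (θhat0 - θhat) ^ 2 * N * n)
      = 2 * (θhat0 - θhat) ^ 2 * (ρ * N * n) by ring,
    ← div_lt_iff₀ hρNn, ← hid2]
  constructor <;> intro h <;> linarith
end

section
/- Sensitivity of the approximate Horvitz–Thompson variance estimator: for any two adjacent samples (y,w) and (y′,w′) with entries satisfying 0 ≤ y_i, y_i′ ≤ U_Y and 1 ≤ w_i, w_i′ ≤ U_W, the estimator V̂(y,w) = (1/N²)·Σ_{i=1}^n w_i·(w_i − 1)·y_i² satisfies |V̂(y,w) − V̂(y′,w′)| ≤ (U_W·U_Y/N)², i.e., Δ(V̂) ≤ Δ(θ̂)² where Δ(θ̂) = U_W·U_Y/N. -/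
open Finset

/-- The approximate Horvitz–Thompson variance estimator
`V̂(y,w) = (1/N²)·Σᵢ wᵢ·(wᵢ − 1)·yᵢ²`. -/
noncomputable def approxHTVar (N n : ℕ) (y w : Fin n → ℝ) : ℝ :=
  (1 / (N : ℝ) ^ 2) * ∑ i, w i * (w i - 1) * y i ^ 2

lemma term_bounds (UY UW a b : ℝ) (hUY : 0 < UY)
    (ha0 : 0 ≤ a) (ha : a ≤ UY) (hb1 : 1 ≤ b) (hb : b ≤ UW) :
    0 ≤ b * (b - 1) * a ^ 2 ∧ b * (b - 1) * a ^ 2 ≤ UW ^ 2 * UY ^ 2 := by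
  have h0 : 0 ≤ b * (b - 1) * a ^ 2 :=
    mul_nonneg (mul_nonneg (by linarith) (by linarith)) (sq_nonneg a)
  refine ⟨h0, ?_⟩
  have hb2 : b * (b - 1) ≤ UW ^ 2 := by nlinarith
  have ha2 : a ^ 2 ≤ UY ^ 2 := by nlinarith
  have := mul_le_mul hb2 ha2 (sq_nonneg a) (by positivity)
  linarith

/-- sensitivity of the approximate Horvitz–Thompson variance
estimator: for adjacent samples with `0 ≤ yᵢ, yᵢ′ ≤ U_Y` and
`1 ≤ wᵢ, wᵢ′ ≤ U_W`, `|V̂(y,w) − V̂(y',w')| ≤ (U_W·U_Y/N)²`, i.e.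
`Δ(V̂) ≤ Δ(θ̂)²`. -/
theorem approxHTVar_sensitivity
    (N n : ℕ) (hn : 1 ≤ n) (hnN : n ≤ N) (UY UW : ℝ)
    (hUY : 0 < UY) (hUW : 1 ≤ UW)
    (y w y' w' : Fin n → ℝ) (hadj : Adjacent y w y' w')
    (hy : ∀ i, 0 ≤ y i ∧ y i ≤ UY) (hy' : ∀ i, 0 ≤ y' i ∧ y' i ≤ UY)
    (hw : ∀ i, 1 ≤ w i ∧ w i ≤ UW) (hw' : ∀ i, 1 ≤ w' i ∧ w' i ≤ UW) :
    |approxHTVar N n y w - approxHTVar N n y' w'| ≤ (UW * UY / N) ^ 2 := by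
  obtain ⟨i, hi⟩ := hadj
  have hN : (0 : ℝ) < N := by
    have : 0 < N := lt_of_lt_of_le hn hnN
    exact_mod_cast this
  set A := w i * (w i - 1) * y i ^ 2 with hA
  set B := w' i * (w' i - 1) * y' i ^ 2 with hB
  have hdiff : approxHTVar N n y w - approxHTVar N n y' w'
      = (1 / (N : ℝ) ^ 2) * (A - B) := by
    unfold approxHTVar
    rw [← mul_sub, ← Finset.sum_sub_distrib]
    congr 1
    rw [Finset.sum_eq_single i]
    · intro j _ hj
      obtain ⟨h1, h2⟩ := hi j hj
      rw [h1, h2]; ring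
    · intro h; exact absurd (Finset.mem_univ i) h
  rw [hdiff]
  obtain ⟨hA0, hAub⟩ := term_bounds UY UW (y i) (w i) hUY (hy i).1 (hy i).2 (hw i).1 (hw i).2
  obtain ⟨hB0, hBub⟩ := term_bounds UY UW (y' i) (w' i) hUY (hy' i).1 (hy' i).2 (hw' i).1 (hw' i).2
  have habs : |A - B| ≤ UW ^ 2 * UY ^ 2 := abs_sub_le_of_nonneg_of_le hA0 hAub hB0 hBub
  rw [abs_mul, abs_of_nonneg (by positivity : (0:ℝ) ≤ 1 / (N:ℝ)^2)]
  have : (UW * UY / N) ^ 2 = (1 / (N:ℝ)^2) * (UW ^ 2 * UY ^ 2) := by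
    field_simp
  rw [this]
  exact mul_le_mul_of_nonneg_left habs (by positivity)
end
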